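/- Under the uniform random assignment of the n subsets to k covers, for every element v ∈ S the expected number of covers containing v satisfies E[l_v(f)] ≥ (1 - 1/e) · min(k, N_v). -/

import Mathlib

open Finset

lemma key_ineq (k N : ℕ) (hk : 1 ≤ k) :
    (1 - 1 / Real.exp 1) * (min k N : ℕ) ≤ (k : ℝ) * (1 - (1 - 1/(k:ℝ))^N) := by
  have hkpos : (0:ℝ) < k := by exact_mod_cast hk
  set x : ℝ := 1 - 1/(k:ℝ) with hxdef
  have hx0 : 0 ≤ x := by
    rw [hxdef]
    have : 1/(k:ℝ) ≤ 1 := by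
      rw [div_le_one hkpos]; exact_mod_cast hk
    linarith
  have hxe : x ≤ Real.exp (-(1/(k:ℝ))) := by
    have := Real.add_one_le_exp (-(1/(k:ℝ)))
    linarith
  have hpow : x ^ N ≤ Real.exp (-(N/(k:ℝ))) := by
    calc x ^ N ≤ (Real.exp (-(1/(k:ℝ))))^N := pow_le_pow_left₀ hx0 hxe N
    _ = Real.exp (-(N/(k:ℝ))) := by
        rw [← Real.exp_nat_mul]; ring_nf
  rcases le_or_gt k N with h | h
  · rw [min_eq_left h]
    have hNk : (1:ℝ) ≤ (N:ℝ)/k := by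
      rw [le_div_iff₀ hkpos]; have : (k:ℝ) ≤ N := by exact_mod_cast h
      linarith
    have : x ^ N ≤ 1 / Real.exp 1 := by
      calc x ^ N ≤ Real.exp (-(N/(k:ℝ))) := hpow
      _ ≤ Real.exp (-1) := Real.exp_le_exp.mpr (by linarith)
      _ = 1 / Real.exp 1 := by rw [Real.exp_neg]; ring
    have h2 : (1:ℝ) - 1/Real.exp 1 ≤ 1 - x^N := by linarith
    calc (1 - 1/Real.exp 1) * (k:ℝ) ≤ (1 - x^N) * k := by
          apply mul_le_mul_of_nonneg_right h2 hkpos.le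
    _ = (k:ℝ) * (1 - x^N) := mul_comm _ _
  · rw [min_eq_right h.le]
    set t : ℝ := (N:ℝ)/k with htdef
    have ht0 : 0 ≤ t := div_nonneg (Nat.cast_nonneg _) hkpos.le
    have ht1 : t ≤ 1 := by
      rw [htdef, div_le_one hkpos]; exact_mod_cast h.le
    have hconv : Real.exp (-t) ≤ (1 - t) * 1 + t * Real.exp (-1) := by
      have := convexOn_exp.2 (Set.mem_univ (0:ℝ)) (Set.mem_univ (-1:ℝ))
        (by linarith : (0:ℝ) ≤ 1 - t) ht0 (by ring : (1 - t) + t = 1)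
      simpa [smul_eq_mul, Real.exp_zero, mul_comm] using this
    have hline : (1 - 1/Real.exp 1) * t ≤ 1 - Real.exp (-t) := by
      have he : Real.exp (-1) = 1 / Real.exp 1 := by rw [Real.exp_neg]; ring
      rw [he] at hconv; nlinarith
    have : (1 - 1/Real.exp 1) * t ≤ 1 - x^N := by
      linarith [hpow, hline]
    calc (1 - 1/Real.exp 1) * (N:ℝ) = ((1 - 1/Real.exp 1) * t) * k := by
          rw [htdef]; field_simp
    _ ≤ (1 - x^N) * k := mul_le_mul_of_nonneg_right this hkpos.le
    _ = (k:ℝ) * (1 - x^N) := mul_comm _ _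

lemma count_avoid {α : Type*} [Fintype α] [DecidableEq α] (n k : ℕ)
    (Sets : Fin n → Finset α) (v : α) (i : Fin k) :
    ((univ : Finset (Fin n → Fin k)).filter fun f => ¬ ∃ j, f j = i ∧ v ∈ Sets j).card
      = (k-1) ^ (univ.filter fun j => v ∈ Sets j).card
        * k ^ (n - (univ.filter fun j => v ∈ Sets j).card) := by
  have hset : ((univ : Finset (Fin n → Fin k)).filter fun f => ¬ ∃ j, f j = i ∧ v ∈ Sets j)
      = Fintype.piFinset (fun j => if v ∈ Sets j then univ.erase i else univ) := by
    ext f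
    simp only [mem_filter, mem_univ, true_and, Fintype.mem_piFinset, not_exists, not_and]
    constructor
    · intro h j
      by_cases hj : v ∈ Sets j
      · simp [hj, mem_erase]
        exact fun he => h j he hj
      · simp [hj]
    · intro h j he hj
      have := h j
      rw [if_pos hj] at this
      exact (mem_erase.mp this).1 he
  rw [hset, Fintype.card_piFinset]
  have : ∀ j : Fin n, (if v ∈ Sets j then univ.erase i else univ).card
      = if v ∈ Sets j then k - 1 else k := by
    intro j
    by_cases hj : v ∈ Sets j <;> simp [hj, card_erase_of_mem, card_univ]
  simp_rw [this]
  rw [prod_ite, prod_const, prod_const]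
  congr 2
  have := card_filter_add_card_filter_not (p := fun j : Fin n => v ∈ Sets j)
    (s := (univ : Finset (Fin n)))
  simp only [card_univ, Fintype.card_fin] at this
  omega

lemma total_sum {α : Type*} [Fintype α] [DecidableEq α] (n k : ℕ)
    (Sets : Fin n → Finset α) (v : α) :
    (∑ f : Fin n → Fin k,
        ((univ.filter fun i : Fin k => ∃ j, f j = i ∧ v ∈ Sets j).card))
      = k * (k ^ n - (k-1) ^ (univ.filter fun j => v ∈ Sets j).card
        * k ^ (n - (univ.filter fun j => v ∈ Sets j).card)) := by
  set N := (univ.filter fun j => v ∈ Sets j).card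
  have h1 : ∀ f : Fin n → Fin k,
      (univ.filter fun i : Fin k => ∃ j, f j = i ∧ v ∈ Sets j).card
      = ∑ i : Fin k, if ∃ j, f j = i ∧ v ∈ Sets j then 1 else 0 := by
    intro f; rw [card_filter]
  simp_rw [h1]
  rw [Finset.sum_comm]
  have h2 : ∀ i : Fin k,
      (∑ f : Fin n → Fin k, if ∃ j, f j = i ∧ v ∈ Sets j then 1 else 0)
      = k ^ n - (k-1) ^ N * k ^ (n - N) := by
    intro i
    rw [← card_filter]
    have hcompl := card_filter_add_card_filter_not
      (p := fun f : Fin n → Fin k => ∃ j, f j = i ∧ v ∈ Sets j)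
      (s := (univ : Finset (Fin n → Fin k)))
    rw [count_avoid n k Sets v i, card_univ, Fintype.card_fun] at hcompl
    simp only [Fintype.card_fin] at hcompl
    rw [← hcompl, Nat.add_sub_cancel]
  rw [Finset.sum_congr rfl fun i _ => h2 i]
  rw [sum_const, card_univ]
  simp [Fintype.card_fin, Nat.smul_one_eq_cast]

/-- SET K-COVER: under the uniform random assignment of the `n` subsets to `k` covers,
for every element `v` the expected number of covers containing `v` is at least
`(1 - 1/e) * min (k, N_v)`, where `N_v` is the number of subsets containing `v`. -/
theorem randomized_expected_element_coverage_ge (α : Type*) [Fintype α] [DecidableEq α]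
    (n k : ℕ) (hk : 1 ≤ k) (Sets : Fin n → Finset α) (v : α) :
    (∑ f : Fin n → Fin k,
        (((univ.filter fun i : Fin k => ∃ j, f j = i ∧ v ∈ Sets j).card : ℕ) : ℝ)) /
        ((k : ℝ) ^ n)
      ≥ (1 - 1 / Real.exp 1) *
          ((min k ((univ.filter fun j => v ∈ Sets j).card) : ℕ) : ℝ) := by
  set N := (univ.filter fun j => v ∈ Sets j).card with hN
  have hkpos : (0:ℝ) < k := by exact_mod_cast hk
  have hNn : N ≤ n := by
    calc N ≤ (univ : Finset (Fin n)).card := card_filter_le _ _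
    _ = n := by simp
  have hA : (k-1) ^ N * k ^ (n - N) ≤ k ^ n := by
    calc (k-1) ^ N * k ^ (n - N) ≤ k ^ N * k ^ (n - N) := by
          apply Nat.mul_le_mul_right
          exact Nat.pow_le_pow_left (Nat.sub_le k 1) N
    _ = k ^ n := by rw [← pow_add, Nat.add_sub_cancel' hNn]
  have hsum : (∑ f : Fin n → Fin k,
        (((univ.filter fun i : Fin k => ∃ j, f j = i ∧ v ∈ Sets j).card : ℕ) : ℝ))
      = (k : ℝ) * ((k:ℝ) ^ n - ((k:ℝ)-1) ^ N * (k:ℝ) ^ (n - N)) := by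
    rw [← Nat.cast_sum]
    rw [total_sum n k Sets v, ← hN, Nat.cast_mul, Nat.cast_sub hA]
    push_cast [Nat.cast_sub hk]
    ring
  rw [hsum]
  have hkn : (k:ℝ) ^ n = (k:ℝ) ^ (n - N) * (k:ℝ) ^ N := by
    rw [← pow_add, Nat.sub_add_cancel hNn]
  have heq : (k : ℝ) * ((k:ℝ) ^ n - ((k:ℝ)-1) ^ N * (k:ℝ) ^ (n - N)) / ((k:ℝ) ^ n)
      = (k : ℝ) * (1 - (1 - 1/(k:ℝ))^N) := by
    rw [hkn]
    have hk1 : (1 : ℝ) - 1/(k:ℝ) = ((k:ℝ)-1)/k := by field_simp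
    rw [hk1, div_pow]
    have hkN : (0:ℝ) < (k:ℝ)^N := pow_pos hkpos N
    have hknN : (0:ℝ) < (k:ℝ)^(n-N) := pow_pos hkpos (n-N)
    field_simp
  rw [heq]
  exact key_ineq k N hk
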